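/- Let K be a commutative ring, S a multiplicative submonoid of K, φ a reduction function and δ an expansion function of ideals of K. Let P and Q be strongly φ-δ-S-primary ideals of K associated to s ∈ S, neither of which is δ-S-primary associated to s. If (P : s) = (δ(P) : s), (Q : s) = (δ(Q) : s), and φ(Q) ⊆ φ(P), then s·Q·P ⊆ φ(P), i.e., s·q·p ∈ φ(P) for every q ∈ Q and every p ∈ P. -/

import Mathlib

/-- Let `P` and `Q` be strongly `φ`-`δ`-`S`-primary ideals of `K` associated to
`s ∈ S`, neither of which is `δ`-`S`-primary associated to `s`. If `(P : s) = (δ(P) : s)`,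
`(Q : s) = (δ(Q) : s)`, and `φ(Q) ⊆ φ(P)`, then `s·Q·P ⊆ φ(P)`. -/
theorem strongly_smul_mul_subset {K : Type*} [CommRing K] (S : Submonoid K)
    (φ δ : Ideal K → Ideal K)
    (hφ1 : ∀ I, φ I ≤ I) (hφ2 : ∀ I J : Ideal K, I ≤ J → φ I ≤ φ J)
    (hδ1 : ∀ I : Ideal K, I ≤ δ I) (hδ2 : ∀ I J : Ideal K, I ≤ J → δ I ≤ δ J)
    (P Q : Ideal K) (s : K) (hs : s ∈ S)
    (hPproper : P ≠ ⊤) (hPdisj : ∀ x ∈ S, x ∉ P)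
    (hQproper : Q ≠ ⊤) (hQdisj : ∀ x ∈ S, x ∉ Q)
    (hPstrong : ∀ A B : Ideal K, A * B ≤ P → ¬ (A * B ≤ φ P) →
      (∀ x ∈ A, s * x ∈ P) ∨ (∀ x ∈ B, s * x ∈ δ P))
    (hQstrong : ∀ A B : Ideal K, A * B ≤ Q → ¬ (A * B ≤ φ Q) →
      (∀ x ∈ A, s * x ∈ Q) ∨ (∀ x ∈ B, s * x ∈ δ Q))
    (hPnot : ∃ a b : K, a * b ∈ P ∧ s * a ∉ P ∧ s * b ∉ δ P)
    (hQnot : ∃ a b : K, a * b ∈ Q ∧ s * a ∉ Q ∧ s * b ∉ δ Q)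
    (hPcolon : P.colon (Ideal.span {s}) = (δ P).colon (Ideal.span {s}))
    (hQcolon : Q.colon (Ideal.span {s}) = (δ Q).colon (Ideal.span {s}))
    (hφQP : φ Q ≤ φ P) :
    ∀ q ∈ Q, ∀ p ∈ P, s * q * p ∈ φ P := by
  obtain ⟨aP, bP, habP, haP, hbP⟩ := hPnot
  obtain ⟨aQ, bQ, habQ, haQ, hbQ⟩ := hQnot
  -- colon transfer: s*x ∈ δP → s*x ∈ P
  have colP : ∀ x : K, s * x ∈ δ P → s * x ∈ P := by
    intro x hx
    have h1 : x ∈ (δ P).colon (Ideal.span {s}) := by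
      rw [Ideal.mem_colon_span_singleton, mul_comm]; exact hx
    rw [← hPcolon, Ideal.mem_colon_span_singleton, mul_comm] at h1
    exact h1
  -- square lemma: a strongly ideal with a witness has I² ≤ ψ I
  have sq : ∀ (I : Ideal K) (ψI εI : Ideal K) (a b : K),
      a * b ∈ I → s * a ∉ I → s * b ∉ εI →
      (∀ A B : Ideal K, A * B ≤ I → ¬ (A * B ≤ ψI) →
        (∀ x ∈ A, s * x ∈ I) ∨ (∀ x ∈ B, s * x ∈ εI)) →
      ∀ x ∈ I, ∀ y ∈ I, x * y ∈ ψI := by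
    intro I ψI εI a b hab ha hb hstrong x hx y hy
    have hIJ : (Ideal.span {a} ⊔ I) * (Ideal.span {b} ⊔ I) ≤ I := by
      rw [Ideal.mul_le]
      intro r hr t ht
      rw [Submodule.mem_sup] at hr ht
      obtain ⟨r1, hr1, r2, hr2, rfl⟩ := hr
      obtain ⟨t1, ht1, t2, ht2, rfl⟩ := ht
      rw [Ideal.mem_span_singleton] at hr1 ht1
      obtain ⟨c, rfl⟩ := hr1
      obtain ⟨d, rfl⟩ := ht1
      have e1 : (a * c + r2) * (b * d + t2) =
          (c * d) * (a * b) + ((a * c) * t2 + (r2 * (b * d) + r2 * t2)) := by ring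
      rw [e1]
      exact add_mem (I.mul_mem_left _ hab)
        (add_mem (I.mul_mem_left _ ht2)
          (add_mem (I.mul_mem_right _ hr2) (I.mul_mem_right _ hr2)))
    have hφIJ : (Ideal.span {a} ⊔ I) * (Ideal.span {b} ⊔ I) ≤ ψI := by
      by_contra hc
      rcases hstrong _ _ hIJ hc with h | h
      · exact ha (h a (Ideal.mem_sup_left (Ideal.mem_span_singleton_self a)))
      · exact hb (h b (Ideal.mem_sup_left (Ideal.mem_span_singleton_self b)))
    exact hφIJ (Ideal.mul_mem_mul (Ideal.mem_sup_right hx) (Ideal.mem_sup_right hy))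
  have hP2 : ∀ x ∈ P, ∀ y ∈ P, x * y ∈ φ P := sq P (φ P) (δ P) aP bP habP haP hbP hPstrong
  have hQ2 : ∀ x ∈ Q, ∀ y ∈ Q, x * y ∈ φ Q := sq Q (φ Q) (δ Q) aQ bQ habQ haQ hbQ hQstrong
  intro q hq p hp
  by_cases hsq : s * q ∈ P
  · exact hP2 _ hsq _ hp
  -- hard case: s*q ∉ P. First get s*p ∈ P.
  have hQP : Q * P ≤ P := Ideal.mul_le_right
  have hsp : s * q * p ∈ φ P ∨ s * p ∈ P := by
    by_cases hc : Q * P ≤ φ P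
    · left
      have : q * p ∈ φ P := hc (Ideal.mul_mem_mul hq hp)
      rw [mul_assoc]
      exact (φ P).mul_mem_left s this
    · rcases hPstrong Q P hQP hc with h | h
      · exact absurd (h q hq) hsq
      · exact Or.inr (colP p (h p hp))
  rcases hsp with h | hsp
  · exact h
  -- now use A = span {q, s*p}, B = span {q}
  set A : Ideal K := Ideal.span {q, s * p} with hA
  set B : Ideal K := Ideal.span {q} with hB
  have hq2 : q * q ∈ P := hφ1 P (hφQP (hQ2 q hq q hq))
  have hAB : A * B ≤ P := by
    rw [Ideal.mul_le]
    intro r hr t ht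
    rw [hB, Ideal.mem_span_singleton] at ht
    obtain ⟨e, rfl⟩ := ht
    rw [hA, Ideal.mem_span_pair] at hr
    obtain ⟨c, d, rfl⟩ := hr
    have e1 : (c * q + d * (s * p)) * (q * e) =
        (c * e) * (q * q) + (d * e) * ((s * p) * q) := by ring
    rw [e1]
    exact add_mem (P.mul_mem_left _ hq2) (P.mul_mem_left _ (P.mul_mem_right q hsp))
  have hqA : q ∈ A := Ideal.subset_span (by simp)
  have hspA : s * p ∈ A := Ideal.subset_span (by simp)
  have hqB : q ∈ B := Ideal.mem_span_singleton_self q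
  have hABφ : A * B ≤ φ P := by
    by_contra hc
    rcases hPstrong A B hAB hc with h | h
    · exact hsq (h q hqA)
    · exact hsq (colP q (h q hqB))
  have : (s * p) * q ∈ φ P := hABφ (Ideal.mul_mem_mul hspA hqB)
  have e2 : s * q * p = (s * p) * q := by ring
  rw [e2]
  exact this
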